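/- Let f : 𝔻 → 𝔻 be a holomorphic map of the open unit disk into itself (not necessarily injective). Then for every r with 0 < r < 1, the area of f(𝔻_r) satisfies |f(𝔻_r)| ≤ |𝔻_r| = πr². -/

import Mathlib

open MeasureTheory Metric Set

private lemma normSq_den_sub (a w : ℂ) :
    Complex.normSq (1 - (starRingEnd ℂ) a * w) - Complex.normSq (w - a)
      = (1 - Complex.normSq a) * (1 - Complex.normSq w) := by
  simp only [Complex.normSq_apply, Complex.sub_re, Complex.sub_im, Complex.mul_re,
    Complex.mul_im, Complex.conj_re, Complex.conj_im, Complex.one_re, Complex.one_im]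
  ring

private lemma den_ne (a w : ℂ) (ha : ‖a‖ < 1) (hw : ‖w‖ < 1) :
    1 - (starRingEnd ℂ) a * w ≠ 0 := by
  intro h
  have h1 : (starRingEnd ℂ) a * w = 1 := by
    have := sub_eq_zero.mp h; exact this.symm
  have h2 : ‖(starRingEnd ℂ) a * w‖ = 1 := by rw [h1]; simp
  rw [norm_mul, Complex.norm_conj] at h2
  nlinarith [norm_nonneg a, norm_nonneg w]

private lemma moebius_maps (a w : ℂ) (ha : ‖a‖ < 1) (hw : ‖w‖ < 1) :
    ‖(w - a) / (1 - (starRingEnd ℂ) a * w)‖ < 1 := by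
  have hden := den_ne a w ha hw
  have hdpos : 0 < ‖1 - (starRingEnd ℂ) a * w‖ := by
    simpa [norm_pos_iff] using hden
  rw [norm_div, div_lt_one hdpos]
  have hsq : Complex.normSq (w - a) < Complex.normSq (1 - (starRingEnd ℂ) a * w) := by
    have h1 := normSq_den_sub a w
    have h2 : Complex.normSq a < 1 := by
      rw [← Complex.sq_norm]; nlinarith [norm_nonneg a]
    have h3 : Complex.normSq w < 1 := by
      rw [← Complex.sq_norm]; nlinarith [norm_nonneg w]
    nlinarith
  rw [← Complex.sq_norm, ← Complex.sq_norm] at hsq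
  nlinarith [norm_nonneg (w - a), norm_nonneg (1 - (starRingEnd ℂ) a * w)]

private lemma key_mem (a w : ℂ) (r : ℝ) (hr : 0 < r) (hr1 : r < 1)
    (ha : Complex.normSq a < 1)
    (h : Complex.normSq (w - a) < r^2 * Complex.normSq (1 - (starRingEnd ℂ) a * w)) :
    w ∈ ball ((((1 - r^2)/(1 - r^2 * Complex.normSq a)) : ℝ) • a)
      (r * (1 - Complex.normSq a)/(1 - r^2 * Complex.normSq a)) := by
  have hn : 0 ≤ Complex.normSq a := Complex.normSq_nonneg a
  have hd : 0 < 1 - r^2 * Complex.normSq a := by nlinarith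
  set d : ℝ := 1 - r^2 * Complex.normSq a with hdef
  have hid : Complex.normSq ((d : ℝ) • w - ((1 - r^2) : ℝ) • a)
      = d * (Complex.normSq (w - a) - r^2 * Complex.normSq (1 - (starRingEnd ℂ) a * w))
        + (r * (1 - Complex.normSq a))^2 := by
    simp only [Complex.normSq_apply, Complex.sub_re, Complex.sub_im, Complex.mul_re,
      Complex.mul_im, Complex.conj_re, Complex.conj_im, Complex.one_re, Complex.one_im,
      Complex.real_smul, Complex.ofReal_re, Complex.ofReal_im, hdef]
    ring
  have step1 : Complex.normSq ((d : ℝ) • w - ((1 - r^2) : ℝ) • a)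
      < (r * (1 - Complex.normSq a))^2 := by nlinarith [hid]
  have hsub : w - (((1 - r^2)/d : ℝ)) • a
      = (d⁻¹ : ℝ) • ((d : ℝ) • w - ((1 - r^2) : ℝ) • a) := by
    rw [smul_sub, smul_smul, smul_smul, inv_mul_cancel₀ hd.ne', one_smul, div_eq_inv_mul,
      mul_comm]
  have habs : ‖(d : ℝ) • w - ((1 - r^2) : ℝ) • a‖
      < r * (1 - Complex.normSq a) := by
    have h1 : 0 ≤ r * (1 - Complex.normSq a) := by nlinarith
    have := Complex.sq_norm ((d : ℝ) • w - ((1 - r^2) : ℝ) • a)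
    nlinarith [norm_nonneg ((d : ℝ) • w - ((1 - r^2) : ℝ) • a)]
  rw [mem_ball, dist_eq_norm, hsub, norm_smul]
  simp only [Real.norm_eq_abs, abs_of_pos (inv_pos.2 hd)]
  rw [div_eq_inv_mul]
  exact mul_lt_mul_of_pos_left (by exact habs) (inv_pos.2 hd)

theorem area_contraction_holomorphic
    (f : ℂ → ℂ)
    (hf : DifferentiableOn ℂ f (ball (0 : ℂ) 1))
    (hmaps : Set.MapsTo f (ball (0 : ℂ) 1) (ball (0 : ℂ) 1)) :
    ∀ r : ℝ, 0 < r → r < 1 →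
      volume (f '' ball (0 : ℂ) r) ≤ volume (ball (0 : ℂ) r) ∧
      volume (ball (0 : ℂ) r) = ENNReal.ofReal (Real.pi * r ^ 2) := by
  intro r hr0 hr1
  have hvol : volume (ball (0 : ℂ) r) = ENNReal.ofReal (Real.pi * r ^ 2) := by
    rw [Complex.volume_ball, ← ENNReal.ofReal_pow hr0.le, ← ENNReal.ofReal_coe_nnreal,
      ← ENNReal.ofReal_mul (by positivity), NNReal.coe_real_pi, mul_comm]
  refine ⟨?_, hvol⟩
  set a : ℂ := f 0 with hadef
  have ha1 : ‖a‖ < 1 := by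
    simpa [mem_ball, dist_zero_right] using
      mem_ball_zero_iff.mp (hmaps (mem_ball_self one_pos))
  have han : Complex.normSq a < 1 := by
    rw [← Complex.sq_norm]; nlinarith [norm_nonneg a]
  have hn : 0 ≤ Complex.normSq a := Complex.normSq_nonneg a
  -- the Möbius composition
  set g : ℂ → ℂ := fun z => (f z - a) / (1 - (starRingEnd ℂ) a * f z) with hgdef
  have hfz1 : ∀ z ∈ ball (0 : ℂ) 1, ‖f z‖ < 1 := fun z hz =>
    mem_ball_zero_iff.mp (hmaps hz)
  have hden : ∀ z ∈ ball (0 : ℂ) 1, 1 - (starRingEnd ℂ) a * f z ≠ 0 := fun z hz =>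
    den_ne a (f z) ha1 (hfz1 z hz)
  have hg : DifferentiableOn ℂ g (ball (0 : ℂ) 1) := by
    apply DifferentiableOn.div (hf.sub (differentiableOn_const a))
      ((differentiableOn_const 1).sub ((differentiableOn_const _).mul hf)) hden
  have hgm : MapsTo g (ball (0 : ℂ) 1) (ball (0 : ℂ) 1) := fun z hz => by
    rw [mem_ball_zero_iff]
    exact moebius_maps a (f z) ha1 (hfz1 z hz)
  have hg0 : g 0 = 0 := by
    simp only [hgdef, ← hadef, sub_self, zero_div]
  -- image inclusion
  have hsubset : f '' ball (0 : ℂ) r ⊆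
      ball ((((1 - r^2)/(1 - r^2 * Complex.normSq a)) : ℝ) • a)
        (r * (1 - Complex.normSq a)/(1 - r^2 * Complex.normSq a)) := by
    rintro _ ⟨z, hz, rfl⟩
    have hz1 : z ∈ ball (0 : ℂ) 1 := by
      rw [mem_ball_zero_iff] at hz ⊢; exact hz.trans hr1
    have hzr : ‖z‖ < r := mem_ball_zero_iff.mp hz
    have hsch : ‖g z‖ ≤ ‖z‖ :=
      Complex.norm_le_norm_of_mapsTo_ball hg (hgm.mono_right ball_subset_closedBall) hg0 (mem_ball_zero_iff.mp hz1)
    have hgzr : ‖g z‖ < r := lt_of_le_of_lt hsch hzr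
    have hdpos : 0 < ‖1 - (starRingEnd ℂ) a * f z‖ := by
      simpa [norm_pos_iff] using hden z hz1
    have habs : ‖f z - a‖ < r * ‖1 - (starRingEnd ℂ) a * f z‖ := by
      have : ‖g z‖ = ‖f z - a‖
          / ‖1 - (starRingEnd ℂ) a * f z‖ := by rw [hgdef]; exact norm_div _ _
      rw [this, div_lt_iff₀ hdpos] at hgzr
      linarith [hgzr]
    apply key_mem a (f z) r hr0 hr1 han
    rw [← Complex.sq_norm, ← Complex.sq_norm, ← mul_pow]
    exact pow_lt_pow_left₀ habs (norm_nonneg _) (by norm_num)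
  -- volume comparison
  have hR : r * (1 - Complex.normSq a)/(1 - r^2 * Complex.normSq a) ≤ r := by
    have hd : 0 < 1 - r^2 * Complex.normSq a := by nlinarith
    rw [div_le_iff₀ hd]
    nlinarith [mul_nonneg (mul_nonneg hr0.le hn) (sub_nonneg.2 (show r^2 ≤ 1 by nlinarith))]
  calc volume (f '' ball (0 : ℂ) r) ≤ volume (ball
        ((((1 - r^2)/(1 - r^2 * Complex.normSq a)) : ℝ) • a)
        (r * (1 - Complex.normSq a)/(1 - r^2 * Complex.normSq a))) := measure_mono hsubset
    _ ≤ volume (ball (0 : ℂ) r) := by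
        rw [Complex.volume_ball, Complex.volume_ball]
        exact mul_le_mul_left (pow_le_pow_left₀ (zero_le)
          (ENNReal.ofReal_le_ofReal hR) 2) _
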